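/- arXiv:2509.22036 — 2 statements merged into one kernel-verified Lean document; each statement's English description precedes it below -/
import Mathlib

section
/- Let μ be a finite Borel measure on ℝ, λ > 0, t > 0 and x ∈ ℝ. Then lim_{h→0} ∫_ℝ [∫_ℝ p_t(z − y) · |(G_λ(y − x − h) − G_λ(y − x))/h − g_λ(x − y)| dy] μ(dz) = 0, where the limit is over h → 0 with h ≠ 0. -/
open MeasureTheory Filter Set

/-- The one-dimensional Gaussian heat kernel `p_s(x) = (2πs)^{-1/2} · exp(−x²/(2s))`. -/
noncomputable def heatKernel (s : ℝ) (x : ℝ) : ℝ :=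
  (2 * Real.pi * s) ^ (-(1/2 : ℝ)) * Real.exp (-x ^ 2 / (2 * s))

/-- `G_λ(x) = (2λ)^{-1/2} · exp(-√(2λ)·|x|)`. -/
noncomputable def Gl (l : ℝ) (x : ℝ) : ℝ :=
  (2 * l) ^ (-(1/2 : ℝ)) * Real.exp (-Real.sqrt (2 * l) * |x|)

/-- `g_λ(x) = -sgn(x) · exp(-√(2λ)·|x|)`. -/
noncomputable def gl (l : ℝ) (x : ℝ) : ℝ :=
  -Real.sign x * Real.exp (-Real.sqrt (2 * l) * |x|)

lemma aux_exp_diff (p q : ℝ) :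
    |Real.exp (-p) - Real.exp (-q)| ≤ Real.exp (-min p q) * |p - q| := by
  wlog h : p ≤ q generalizing p q
  · rw [abs_sub_comm, min_comm, abs_sub_comm p q]
    exact this q p (le_of_not_ge h)
  have h1 : Real.exp (-q) ≤ Real.exp (-p) := Real.exp_le_exp.mpr (by linarith)
  rw [min_eq_left h, abs_of_nonneg (by linarith), abs_of_nonpos (by linarith)]
  have h2 : Real.exp (-p) * Real.exp (p - q) = Real.exp (-q) := by
    rw [← Real.exp_add]; ring_nf
  nlinarith [Real.add_one_le_exp (p - q), Real.exp_pos (-p)]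

lemma aux_measurable_sign : Measurable Real.sign := by
  unfold Real.sign
  exact Measurable.ite (measurableSet_lt measurable_id measurable_const) measurable_const
    (Measurable.ite (measurableSet_lt measurable_const measurable_id) measurable_const
      measurable_const)

lemma aux_integrable_exp_neg_abs {a : ℝ} (ha : 0 < a) :
    Integrable (fun u : ℝ => Real.exp (-a * |u|)) := by
  have hm : Measurable (fun u : ℝ => Real.exp (-a * |u|)) := by fun_prop
  have hIoi : IntegrableOn (fun u : ℝ => Real.exp (-a * |u|)) (Ioi 0) := by
    refine (exp_neg_integrableOn_Ioi 0 ha).congr_fun ?_ measurableSet_Ioi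
    intro u hu; simp [abs_of_pos (mem_Ioi.mp hu)]
  have hIio : IntegrableOn (fun u : ℝ => Real.exp (-a * |u|)) (Iio 0) := by
    have h1 : Integrable ((Ioi (0:ℝ)).indicator (fun u : ℝ => Real.exp (-a * |u|))) := by
      rwa [integrable_indicator_iff measurableSet_Ioi]
    have h2 := h1.comp_neg
    have h3 : ((Ioi (0:ℝ)).indicator (fun u : ℝ => Real.exp (-a * |u|))) ∘ Neg.neg
        = (Iio (0:ℝ)).indicator (fun u : ℝ => Real.exp (-a * |u|)) := by
      funext u
      by_cases hu : u < 0
      · simp [indicator, hu, Set.mem_Ioi, Set.mem_Iio, neg_pos.mpr hu, abs_neg]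
      · simp [indicator, Set.mem_Ioi, Set.mem_Iio, hu,
          not_lt_of_ge (neg_nonpos.mpr (not_lt.mp hu)), abs_neg]
    have h2' : Integrable (((Ioi (0:ℝ)).indicator fun u : ℝ => Real.exp (-a * |u|)) ∘ Neg.neg) := h2
    rw [h3] at h2'
    have h2 := h2'
    rwa [integrable_indicator_iff measurableSet_Iio] at h2
  have h0 : IntegrableOn (fun u : ℝ => Real.exp (-a * |u|)) {0} := by
    unfold IntegrableOn
    rw [Measure.restrict_eq_zero.mpr (measure_singleton 0)]
    exact integrable_zero_measure
  have : IntegrableOn (fun u : ℝ => Real.exp (-a * |u|)) (Iio 0 ∪ {0} ∪ Ioi 0) :=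
    (hIio.union h0).union hIoi
  rw [← integrableOn_univ]
  refine this.mono_set ?_ |>.mono_set subset_rfl
  intro u _
  rcases lt_trichotomy u 0 with h | h | h
  · exact Or.inl (Or.inl h)
  · exact Or.inl (Or.inr (by simp [h]))
  · exact Or.inr h


lemma aux_ac {l : ℝ} (hl : 0 < l) :
    Real.sqrt (2 * l) * (2 * l) ^ (-(1/2 : ℝ)) = 1 := by
  rw [Real.sqrt_eq_rpow, ← Real.rpow_add (by linarith)]
  norm_num

lemma aux_gl_neg (l v : ℝ) : gl l (-v) = -gl l v := by
  simp only [gl, Real.sign_neg, abs_neg]; ring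

lemma aux_hasDerivAt_Gl {l : ℝ} (hl : 0 < l) {u : ℝ} (hu : u ≠ 0) :
    HasDerivAt (Gl l) (gl l u) u := by
  set a := Real.sqrt (2 * l) with ha_def
  set c := (2 * l) ^ (-(1/2 : ℝ)) with hc_def
  have hac : a * c = 1 := aux_ac hl
  rcases hu.lt_or_gt with hu | hu
  · have hglu : gl l u = Real.exp (a * u) := by
      simp only [gl]
      rw [Real.sign_of_neg hu, abs_of_neg hu, ← ha_def, neg_mul_neg]
      norm_num
    have hd : HasDerivAt (fun x : ℝ => c * Real.exp (a * x)) (gl l u) u := by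
      have h1 : HasDerivAt (fun x : ℝ => a * x) a u := by
        simpa using (hasDerivAt_id u).const_mul a
      have h3 := ((Real.hasDerivAt_exp (a * u)).comp u h1).const_mul c
      exact h3.congr_deriv (by rw [hglu]; linear_combination Real.exp (a * u) * hac)
    refine hd.congr_of_eventuallyEq ?_
    filter_upwards [gt_mem_nhds hu] with x hx
    rw [Gl, ← ha_def, ← hc_def, abs_of_neg hx, neg_mul_neg]
  · have hglu : gl l u = -Real.exp (-a * u) := by
      simp only [gl]
      rw [Real.sign_of_pos hu, abs_of_pos hu, ← ha_def]
      ring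
    have hd : HasDerivAt (fun x : ℝ => c * Real.exp (-a * x)) (gl l u) u := by
      have h1 : HasDerivAt (fun x : ℝ => -a * x) (-a) u := by
        simpa using (hasDerivAt_id u).const_mul (-a)
      have h3 := ((Real.hasDerivAt_exp (-a * u)).comp u h1).const_mul c
      exact h3.congr_deriv (by rw [hglu]; linear_combination (-Real.exp (-a * u)) * hac)
    refine hd.congr_of_eventuallyEq ?_
    filter_upwards [lt_mem_nhds hu] with x hx
    rw [Gl, ← ha_def, ← hc_def, abs_of_pos hx]

-- from aux1
lemma aux_quot_bound {l : ℝ} (hl : 0 < l) (x : ℝ) {h : ℝ} (hh0 : h ≠ 0) (hh1 : |h| ≤ 1)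
    (y : ℝ) :
    |(Gl l (y - x - h) - Gl l (y - x)) / h|
      ≤ Real.exp (Real.sqrt (2 * l)) * Real.exp (-(Real.sqrt (2 * l) * |y - x|)) := by
  set a := Real.sqrt (2 * l) with ha_def
  set c := (2 * l) ^ (-(1/2 : ℝ)) with hc_def
  have ha : 0 < a := Real.sqrt_pos.mpr (by linarith)
  have hc : 0 < c := Real.rpow_pos_of_pos (by linarith) _
  have hac : a * c = 1 := aux_ac hl
  set u := y - x with hu_def
  have e1 : Gl l (u - h) - Gl l u
      = c * (Real.exp (-(a * |u - h|)) - Real.exp (-(a * |u|))) := by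
    rw [Gl, Gl, ← ha_def, ← hc_def]; ring
  have e2 := aux_exp_diff (a * |u - h|) (a * |u|)
  have e3 : abs (a * |u - h| - a * |u|) ≤ a * |h| := by
    rw [← mul_sub, abs_mul, abs_of_pos ha]
    have h4 : abs (|u - h| - |u|) ≤ |h| := by
      simpa using abs_abs_sub_abs_le_abs_sub (u - h) u
    exact mul_le_mul_of_nonneg_left h4 ha.le
  have e4 : Real.exp (-min (a * |u - h|) (a * |u|)) ≤ Real.exp a * Real.exp (-(a * |u|)) := by
    rw [← Real.exp_add]
    apply Real.exp_le_exp.mpr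
    have h5 : a * |u| - a ≤ a * |u - h| := by
      have h6 : |u| - |h| ≤ |u - h| := abs_sub_abs_le_abs_sub u h
      nlinarith
    have h7 : a * |u| - a ≤ a * |u| := by nlinarith
    have := le_min h5 h7
    linarith
  have e5 : |Gl l (u - h) - Gl l u| ≤ Real.exp a * Real.exp (-(a * |u|)) * |h| := by
    rw [e1, abs_mul, abs_of_pos hc]
    calc c * |Real.exp (-(a * |u - h|)) - Real.exp (-(a * |u|))|
        ≤ c * (Real.exp (-min (a * |u - h|) (a * |u|)) * abs (a * |u - h| - a * |u|)) :=
          mul_le_mul_of_nonneg_left e2 hc.le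
      _ ≤ c * (Real.exp (-min (a * |u - h|) (a * |u|)) * (a * |h|)) := by gcongr
      _ ≤ c * ((Real.exp a * Real.exp (-(a * |u|))) * (a * |h|)) := by
          gcongr
      _ = Real.exp a * Real.exp (-(a * |u|)) * |h| * (a * c) := by ring
      _ = Real.exp a * Real.exp (-(a * |u|)) * |h| := by rw [hac, mul_one]
  rw [abs_div, div_le_iff₀ (abs_pos.mpr hh0)]
  exact e5

lemma aux_abs_gl_le (l v : ℝ) :
    |gl l v| ≤ Real.exp (-(Real.sqrt (2 * l) * |v|)) := by
  rw [gl, abs_mul, abs_neg, Real.abs_exp]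
  have h1 : |Real.sign v| ≤ 1 := by
    rcases Real.sign_apply_eq v with h | h | h <;> simp [h]
  have h2 : Real.exp (-Real.sqrt (2 * l) * |v|) = Real.exp (-(Real.sqrt (2 * l) * |v|)) := by
    rw [neg_mul]
  rw [h2]
  nlinarith [Real.exp_pos (-(Real.sqrt (2 * l) * |v|))]

lemma aux_measurable_gl (l : ℝ) : Measurable (gl l) := by
  unfold gl
  exact (aux_measurable_sign.neg).mul
    (Real.measurable_exp.comp (measurable_const.mul measurable_abs))

lemma aux_continuous_Gl (l : ℝ) : Continuous (Gl l) := by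
  unfold Gl
  fun_prop

lemma aux_inner_tendsto {l : ℝ} (hl : 0 < l) (x : ℝ) :
    Tendsto (fun h : ℝ => ∫ y, |(Gl l (y - x - h) - Gl l (y - x)) / h - gl l (x - y)|)
      (nhdsWithin 0 {(0 : ℝ)}ᶜ) (nhds 0) := by
  set a := Real.sqrt (2 * l) with ha_def
  have ha : 0 < a := Real.sqrt_pos.mpr (by linarith)
  have hmeas : ∀ h : ℝ, AEStronglyMeasurable
      (fun y => |(Gl l (y - x - h) - Gl l (y - x)) / h - gl l (x - y)|) volume := by
    intro h
    apply Measurable.aestronglyMeasurable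
    apply Measurable.abs
    apply Measurable.sub
    · exact (((aux_continuous_Gl l).measurable.comp
        ((measurable_id.sub measurable_const).sub measurable_const)).sub
        ((aux_continuous_Gl l).measurable.comp (measurable_id.sub measurable_const))).div_const h
    · exact (aux_measurable_gl l).comp (measurable_const.sub measurable_id)
  have hbound_int : Integrable
      (fun y : ℝ => (Real.exp a + 1) * Real.exp (-(a * |y - x|))) := by
    have h1 := ((aux_integrable_exp_neg_abs ha).comp_sub_right x).const_mul (Real.exp a + 1)
    simpa [neg_mul] using h1
  have hbound : ∀ᶠ h : ℝ in nhdsWithin 0 {(0 : ℝ)}ᶜ, ∀ᵐ y : ℝ,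
      ‖|(Gl l (y - x - h) - Gl l (y - x)) / h - gl l (x - y)|‖
        ≤ (Real.exp a + 1) * Real.exp (-(a * |y - x|)) := by
    have h1 : ∀ᶠ h : ℝ in nhdsWithin 0 {(0 : ℝ)}ᶜ, |h| ≤ 1 := by
      refine Eventually.filter_mono nhdsWithin_le_nhds ?_
      filter_upwards [eventually_abs_sub_lt 0 one_pos] with h hh
      rw [sub_zero] at hh; exact hh.le
    have h2 : ∀ᶠ h : ℝ in nhdsWithin 0 {(0 : ℝ)}ᶜ, h ≠ 0 := by
      filter_upwards [self_mem_nhdsWithin] with h hh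
      simpa using hh
    filter_upwards [h1, h2] with h hh1 hh0
    apply Eventually.of_forall
    intro y
    rw [Real.norm_eq_abs, abs_abs]
    calc |(Gl l (y - x - h) - Gl l (y - x)) / h - gl l (x - y)|
        ≤ |(Gl l (y - x - h) - Gl l (y - x)) / h| + |gl l (x - y)| := abs_sub _ _
      _ ≤ Real.exp a * Real.exp (-(a * |y - x|)) + Real.exp (-(a * |x - y|)) :=
          add_le_add (aux_quot_bound hl x hh0 hh1 y) (aux_abs_gl_le l (x - y))
      _ = (Real.exp a + 1) * Real.exp (-(a * |y - x|)) := by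
          rw [abs_sub_comm x y]; ring
  have hae_ne : ∀ᵐ y : ℝ, y ≠ x := by
    rw [ae_iff]
    have hs : {y : ℝ | ¬ y ≠ x} = {x} := by ext y; simp
    rw [hs]
    exact Real.volume_singleton
  have hlim : ∀ᵐ y : ℝ, Tendsto
      (fun h : ℝ => |(Gl l (y - x - h) - Gl l (y - x)) / h - gl l (x - y)|)
      (nhdsWithin 0 {(0 : ℝ)}ᶜ) (nhds 0) := by
    filter_upwards [hae_ne] with y hy
    have hu : y - x ≠ 0 := sub_ne_zero.mpr hy
    have hder := aux_hasDerivAt_Gl hl hu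
    rw [hasDerivAt_iff_tendsto_slope] at hder
    have hmap : Tendsto (fun h : ℝ => y - x - h) (nhdsWithin 0 {(0 : ℝ)}ᶜ)
        (nhdsWithin (y - x) {y - x}ᶜ) := by
      rw [tendsto_nhdsWithin_iff]
      constructor
      · have h3 : Tendsto (fun h : ℝ => y - x - h) (nhds 0) (nhds (y - x - 0)) :=
          (continuous_const.sub continuous_id).tendsto 0
        rw [sub_zero] at h3
        exact h3.mono_left nhdsWithin_le_nhds
      · filter_upwards [self_mem_nhdsWithin] with h hh
        simp only [mem_compl_iff, mem_singleton_iff] at hh ⊢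
        intro hcon
        exact hh (by linarith)
    have hslope := hder.comp hmap
    have heq : ∀ h : ℝ, -(slope (Gl l) (y - x) (y - x - h))
        = (Gl l (y - x - h) - Gl l (y - x)) / h := by
      intro h
      rw [slope_def_field]
      have h4 : y - x - h - (y - x) = -h := by ring
      rw [h4, div_neg, neg_neg]
    have hT : Tendsto (fun h : ℝ => (Gl l (y - x - h) - Gl l (y - x)) / h)
        (nhdsWithin 0 {(0 : ℝ)}ᶜ) (nhds (-(gl l (y - x)))) := by
      have h5 := hslope.neg
      simp only [Function.comp_def] at h5
      simpa only [heq] using h5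
    have hglxy : gl l (x - y) = -(gl l (y - x)) := by
      have h6 : x - y = -(y - x) := by ring
      rw [h6, aux_gl_neg]
    have h7 : Tendsto (fun h : ℝ => (Gl l (y - x - h) - Gl l (y - x)) / h - gl l (x - y))
        (nhdsWithin 0 {(0 : ℝ)}ᶜ) (nhds 0) := by
      have h8 := hT.sub (tendsto_const_nhds (x := gl l (x - y)))
      have h9 : -(gl l (y - x)) - gl l (x - y) = 0 := by rw [hglxy]; ring
      rwa [h9] at h8
    simpa using h7.abs
  have hmain := MeasureTheory.tendsto_integral_filter_of_dominated_convergence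
    (μ := volume) (bound := fun y : ℝ => (Real.exp a + 1) * Real.exp (-(a * |y - x|)))
    (F := fun (h : ℝ) (y : ℝ) => |(Gl l (y - x - h) - Gl l (y - x)) / h - gl l (x - y)|)
    (f := fun _ : ℝ => (0 : ℝ))
    (Eventually.of_forall hmeas) hbound hbound_int hlim
  simpa using hmain

lemma aux_integrable_D {l : ℝ} (hl : 0 < l) (x : ℝ) {h : ℝ} (hh0 : h ≠ 0) (hh1 : |h| ≤ 1) :
    Integrable (fun y : ℝ => |(Gl l (y - x - h) - Gl l (y - x)) / h - gl l (x - y)|) := by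
  set a := Real.sqrt (2 * l) with ha_def
  have ha : 0 < a := Real.sqrt_pos.mpr (by linarith)
  have hbound_int : Integrable
      (fun y : ℝ => (Real.exp a + 1) * Real.exp (-(a * |y - x|))) := by
    have h1 := ((aux_integrable_exp_neg_abs ha).comp_sub_right x).const_mul (Real.exp a + 1)
    simpa [neg_mul] using h1
  have hmeas : AEStronglyMeasurable
      (fun y : ℝ => |(Gl l (y - x - h) - Gl l (y - x)) / h - gl l (x - y)|) volume := by
    apply Measurable.aestronglyMeasurable
    apply Measurable.abs
    apply Measurable.sub
    · exact (((aux_continuous_Gl l).measurable.comp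
        ((measurable_id.sub measurable_const).sub measurable_const)).sub
        ((aux_continuous_Gl l).measurable.comp (measurable_id.sub measurable_const))).div_const h
    · exact (aux_measurable_gl l).comp (measurable_const.sub measurable_id)
  refine hbound_int.mono' hmeas (Eventually.of_forall fun y => ?_)
  rw [Real.norm_eq_abs, abs_abs]
  calc |(Gl l (y - x - h) - Gl l (y - x)) / h - gl l (x - y)|
      ≤ |(Gl l (y - x - h) - Gl l (y - x)) / h| + |gl l (x - y)| := abs_sub _ _
    _ ≤ Real.exp a * Real.exp (-(a * |y - x|)) + Real.exp (-(a * |x - y|)) :=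
        add_le_add (aux_quot_bound hl x hh0 hh1 y) (aux_abs_gl_le l (x - y))
    _ = (Real.exp a + 1) * Real.exp (-(a * |y - x|)) := by
        rw [abs_sub_comm x y]; ring


/-- Let `μ` be a finite Borel measure on `ℝ`, `λ > 0`, `t > 0`, `x ∈ ℝ`. Then
`lim_{h→0} ∫_ℝ [∫_ℝ p_t(z − y)·|(G_λ(y − x − h) − G_λ(y − x))/h − g_λ(x − y)| dy] μ(dz) = 0`,
the limit being over `h → 0`, `h ≠ 0`. -/
theorem expected_difference_quotient_X_tendsto_zero (μ : Measure ℝ) [IsFiniteMeasure μ]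
    (l : ℝ) (hl : 0 < l) (t : ℝ) (ht : 0 < t) (x : ℝ) :
    Tendsto
      (fun h : ℝ => ∫ z,
        (∫ y, heatKernel t (z - y) *
          |(Gl l (y - x - h) - Gl l (y - x)) / h - gl l (x - y)|) ∂μ)
      (nhdsWithin 0 {(0 : ℝ)}ᶜ) (nhds 0) := by
  set C := (2 * Real.pi * t) ^ (-(1/2 : ℝ)) with hC_def
  have hC : 0 ≤ C := Real.rpow_nonneg (by positivity) _
  have hk_nonneg : ∀ w, 0 ≤ heatKernel t w := by
    intro w
    rw [heatKernel, ← hC_def]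
    exact mul_nonneg hC (Real.exp_pos _).le
  have hk_le : ∀ w, heatKernel t w ≤ C := by
    intro w
    rw [heatKernel, ← hC_def]
    have h1 : -w ^ 2 / (2 * t) ≤ 0 :=
      div_nonpos_of_nonpos_of_nonneg (neg_nonpos.mpr (by positivity)) (by positivity)
    have h2 : Real.exp (-w ^ 2 / (2 * t)) ≤ 1 := Real.exp_le_one_iff.mpr h1
    calc C * Real.exp (-w ^ 2 / (2 * t)) ≤ C * 1 :=
          mul_le_mul_of_nonneg_left h2 hC
      _ = C := mul_one C
  have houter_nonneg : ∀ h : ℝ, 0 ≤ ∫ z,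
      (∫ y, heatKernel t (z - y) *
        |(Gl l (y - x - h) - Gl l (y - x)) / h - gl l (x - y)|) ∂μ := by
    intro h
    exact integral_nonneg fun z =>
      integral_nonneg fun y => mul_nonneg (hk_nonneg _) (abs_nonneg _)
  have hub : ∀ᶠ h : ℝ in nhdsWithin 0 {(0 : ℝ)}ᶜ,
      (∫ z, (∫ y, heatKernel t (z - y) *
        |(Gl l (y - x - h) - Gl l (y - x)) / h - gl l (x - y)|) ∂μ)
      ≤ (μ univ).toReal * (C *
        ∫ y, |(Gl l (y - x - h) - Gl l (y - x)) / h - gl l (x - y)|) := by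
    have h1 : ∀ᶠ h : ℝ in nhdsWithin 0 {(0 : ℝ)}ᶜ, |h| ≤ 1 := by
      refine Eventually.filter_mono nhdsWithin_le_nhds ?_
      filter_upwards [eventually_abs_sub_lt 0 one_pos] with h hh
      rw [sub_zero] at hh; exact hh.le
    have h2 : ∀ᶠ h : ℝ in nhdsWithin 0 {(0 : ℝ)}ᶜ, h ≠ 0 := by
      filter_upwards [self_mem_nhdsWithin] with h hh
      simpa using hh
    filter_upwards [h1, h2] with h hh1 hh0
    have hInt := aux_integrable_D hl x hh0 hh1
    have hinner : ∀ z : ℝ, (∫ y, heatKernel t (z - y) *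
        |(Gl l (y - x - h) - Gl l (y - x)) / h - gl l (x - y)|)
        ≤ C * ∫ y, |(Gl l (y - x - h) - Gl l (y - x)) / h - gl l (x - y)| := by
      intro z
      calc (∫ y, heatKernel t (z - y) *
          |(Gl l (y - x - h) - Gl l (y - x)) / h - gl l (x - y)|)
          ≤ ∫ y, C * |(Gl l (y - x - h) - Gl l (y - x)) / h - gl l (x - y)| := by
            refine integral_mono_of_nonneg (Eventually.of_forall fun y =>
              mul_nonneg (hk_nonneg _) (abs_nonneg _)) (hInt.const_mul C)
              (Eventually.of_forall fun y => ?_)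
            exact mul_le_mul_of_nonneg_right (hk_le _) (abs_nonneg _)
        _ = C * ∫ y, |(Gl l (y - x - h) - Gl l (y - x)) / h - gl l (x - y)| :=
            integral_const_mul C _
    calc (∫ z, (∫ y, heatKernel t (z - y) *
        |(Gl l (y - x - h) - Gl l (y - x)) / h - gl l (x - y)|) ∂μ)
        ≤ ∫ _z, (C * ∫ y, |(Gl l (y - x - h) - Gl l (y - x)) / h - gl l (x - y)|) ∂μ := by
          refine integral_mono_of_nonneg (Eventually.of_forall fun z =>
            integral_nonneg fun y => mul_nonneg (hk_nonneg _) (abs_nonneg _))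
            (integrable_const _) (Eventually.of_forall hinner)
      _ = (μ univ).toReal * (C *
          ∫ y, |(Gl l (y - x - h) - Gl l (y - x)) / h - gl l (x - y)|) := by
          rw [integral_const, smul_eq_mul]
          rfl
  have hlimit : Tendsto (fun h : ℝ => (μ univ).toReal * (C *
      ∫ y, |(Gl l (y - x - h) - Gl l (y - x)) / h - gl l (x - y)|))
      (nhdsWithin 0 {(0 : ℝ)}ᶜ) (nhds 0) := by
    have h3 := (((aux_inner_tendsto hl x).const_mul C).const_mul (μ univ).toReal)
    simpa using h3
  exact squeeze_zero' (Eventually.of_forall houter_nonneg) hub hlimit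
end

section
/- Let μ be a finite Borel measure on ℝ, λ > 0, T > 0, x ∈ ℝ and p ≥ 1. Then lim_{h→0} ∫_0^T ∫_ℝ |(G_λ(y − x − h) − G_λ(y − x))/h − g_λ(x − y)|^p · (∫_ℝ p_s(y − z) μ(dz)) dy ds = 0, where the limit is over h → 0 with h ≠ 0. -/
open MeasureTheory Filter Set

lemma rpow_neg_half_eq {x : ℝ} (hx : 0 < x) : x ^ (-(1/2 : ℝ)) = (Real.sqrt x)⁻¹ := by
  rw [Real.rpow_neg hx.le, Real.sqrt_eq_rpow]

lemma exp_lip {c a b : ℝ} (hc : 0 ≤ c) (ha : 0 ≤ a) (hb : 0 ≤ b) :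
    |Real.exp (-c * a) - Real.exp (-c * b)| ≤ c * |a - b| := by
  wlog hab : a ≤ b generalizing a b
  · rw [abs_sub_comm, abs_sub_comm a b]; exact this hb ha (le_of_not_ge hab)
  have h1 : Real.exp (-c * b) ≤ Real.exp (-c * a) :=
    Real.exp_le_exp.mpr (by nlinarith)
  rw [abs_of_nonneg (by linarith), abs_of_nonpos (by linarith)]
  have key : Real.exp (-c * a) - Real.exp (-c * b) ≤ c * (b - a) := by
    have h2 : Real.exp (-c * a) ≤ 1 := Real.exp_le_one_iff.mpr (by nlinarith)
    have h3 : 1 - (c * (b - a)) ≤ Real.exp (-(c * (b - a))) := by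
      have := Real.add_one_le_exp (-(c * (b - a))); linarith
    have h4 : Real.exp (-c * b) = Real.exp (-c * a) * Real.exp (-(c * (b - a))) := by
      rw [← Real.exp_add]; ring_nf
    calc Real.exp (-c * a) - Real.exp (-c * b)
        = Real.exp (-c * a) * (1 - Real.exp (-(c * (b - a)))) := by rw [h4]; ring
      _ ≤ 1 * (c * (b - a)) := by
          have h5 : Real.exp (-(c * (b - a))) ≤ 1 := Real.exp_le_one_iff.mpr (by nlinarith)
          exact mul_le_mul h2 (by linarith) (by linarith) one_pos.le
      _ = c * (b - a) := by ring
  linarith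

lemma sqrt2l_pos {l : ℝ} (hl : 0 < l) : 0 < Real.sqrt (2 * l) :=
  Real.sqrt_pos.mpr (by linarith)

lemma Gl_lip {l : ℝ} (hl : 0 < l) (a b : ℝ) : |Gl l a - Gl l b| ≤ |a - b| := by
  set c := Real.sqrt (2 * l) with hc
  have hcpos : 0 < c := sqrt2l_pos hl
  have h2l : (2 * l) ^ (-(1/2 : ℝ)) = c⁻¹ := rpow_neg_half_eq (by linarith)
  have : Gl l a - Gl l b = c⁻¹ * (Real.exp (-c * |a|) - Real.exp (-c * |b|)) := by
    rw [Gl, Gl, h2l]; ring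
  rw [this, abs_mul, abs_of_nonneg (inv_nonneg.mpr hcpos.le)]
  calc c⁻¹ * |Real.exp (-c * |a|) - Real.exp (-c * |b|)|
      ≤ c⁻¹ * (c * |(|a|) - (|b|)|) := by
        exact mul_le_mul_of_nonneg_left (exp_lip hcpos.le (abs_nonneg a) (abs_nonneg b))
          (inv_nonneg.mpr hcpos.le)
    _ = |(|a|) - (|b|)| := by field_simp
    _ ≤ |a - b| := abs_abs_sub_abs_le_abs_sub a b

lemma gl_abs_le {l : ℝ} (v : ℝ) : |gl l v| ≤ 1 := by
  rw [gl, abs_mul, abs_neg]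
  have h1 : |Real.sign v| ≤ 1 := by
    rcases lt_trichotomy v 0 with h | h | h
    · rw [Real.sign_of_neg h]; norm_num
    · rw [h, Real.sign_zero]; norm_num
    · rw [Real.sign_of_pos h]; norm_num
  have h2 : |Real.exp (-Real.sqrt (2 * l) * |v|)| ≤ 1 := by
    rw [abs_of_nonneg (Real.exp_pos _).le]
    exact Real.exp_le_one_iff.mpr (mul_nonpos_of_nonpos_of_nonneg
      (neg_nonpos.mpr (Real.sqrt_nonneg _)) (abs_nonneg _))
  calc |Real.sign v| * |Real.exp (-Real.sqrt (2 * l) * |v|)| ≤ 1 * 1 :=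
        mul_le_mul h1 h2 (abs_nonneg _) one_pos.le
    _ = 1 := one_mul 1

lemma quot_pos {l h u : ℝ} (hl : 0 < l) (hh : h ≠ 0) (hu : |h| < u)
    (hch : Real.sqrt (2 * l) * |h| ≤ 1) :
    |(Gl l (u - h) - Gl l u) / h - Real.exp (-Real.sqrt (2 * l) * u)| ≤
      Real.sqrt (2 * l) * |h| := by
  set c := Real.sqrt (2 * l) with hc
  have hcpos : 0 < c := sqrt2l_pos hl
  have h2l : (2 * l) ^ (-(1/2 : ℝ)) = c⁻¹ := rpow_neg_half_eq (by linarith)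
  have hu0 : 0 < u := lt_of_le_of_lt (abs_nonneg h) hu
  have huh : 0 < u - h := by
    have := abs_lt.mp hu; linarith [this.2]
  have hchpos : 0 < c * |h| := mul_pos hcpos (abs_pos.mpr hh)
  have key : (Gl l (u - h) - Gl l u) / h - Real.exp (-c * u)
      = Real.exp (-c * u) * ((Real.exp (c * h) - 1 - c * h) / (c * h)) := by
    rw [Gl, Gl, h2l, abs_of_pos huh, abs_of_pos hu0]
    have hsplit : Real.exp (-c * (u - h)) = Real.exp (-c * u) * Real.exp (c * h) := by
      rw [← Real.exp_add]; ring_nf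
    rw [hsplit]
    rw [show Real.sqrt (2 * l) = c from hc.symm]
    set E := Real.exp (-c * u) with hE
    set F := Real.exp (c * h) with hF
    field_simp
  have hnum : |Real.exp (c * h) - 1 - c * h| ≤ (c * h) ^ 2 :=
    Real.abs_exp_sub_one_sub_id_le (by rw [abs_mul, abs_of_pos hcpos]; exact hch)
  have hexp1 : Real.exp (-c * u) ≤ 1 := Real.exp_le_one_iff.mpr (by nlinarith)
  have hsq : (c * h) ^ 2 = (c * |h|) ^ 2 := by rw [mul_pow, mul_pow, sq_abs]
  rw [key, abs_mul, abs_of_nonneg (Real.exp_pos _).le, abs_div, abs_mul, abs_of_pos hcpos]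
  calc Real.exp (-c * u) * (|Real.exp (c * h) - 1 - c * h| / (c * |h|))
      ≤ 1 * ((c * h) ^ 2 / (c * |h|)) := by gcongr
    _ = c * |h| := by rw [one_mul, hsq, sq, mul_div_assoc, div_self hchpos.ne', mul_one]


lemma Gl_even (l v : ℝ) : Gl l (-v) = Gl l v := by rw [Gl, Gl, abs_neg]

lemma quot_est {l h u : ℝ} (hl : 0 < l) (hh : h ≠ 0) (hu : |h| < |u|)
    (hch : Real.sqrt (2 * l) * |h| ≤ 1) :
    |(Gl l (u - h) - Gl l u) / h - Real.sign u * Real.exp (-Real.sqrt (2 * l) * |u|)| ≤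
      Real.sqrt (2 * l) * |h| := by
  rcases lt_trichotomy u 0 with hneg | hzero | hpos
  · have hv : |h| < -u := by rwa [abs_of_neg hneg] at hu
    have h1 : Gl l (u - h) = Gl l (-u - -h) := by
      rw [show (-u - -h : ℝ) = -(u - h) by ring, Gl_even]
    have h2 : Gl l u = Gl l (-u) := (Gl_even l u).symm
    have h3 : Real.sign u = -1 := Real.sign_of_neg hneg
    have h4 : |u| = -u := abs_of_neg hneg
    have := quot_pos hl (neg_ne_zero.mpr hh) (by rwa [abs_neg]) (by rwa [abs_neg]) (u := -u)
    rw [h1, h2, h3, h4]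
    rw [show (Gl l (-u - -h) - Gl l (-u)) / h - -1 * Real.exp (-Real.sqrt (2 * l) * -u)
        = -((Gl l (-u - -h) - Gl l (-u)) / -h - Real.exp (-Real.sqrt (2 * l) * -u)) by
      rw [div_neg]; ring]
    rwa [abs_neg, ← abs_neg h] at this ⊢
  · exfalso; rw [hzero, abs_zero] at hu; exact absurd hu (not_lt.mpr (abs_nonneg h))
  · have h3 : Real.sign u = 1 := Real.sign_of_pos hpos
    have h4 : |u| = u := abs_of_pos hpos
    rw [h3, h4, one_mul]
    exact quot_pos hl hh (by rwa [h4] at hu) hch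

lemma quot_bound {l h : ℝ} (hl : 0 < l) (hh : h ≠ 0) (u : ℝ) :
    |(Gl l (u - h) - Gl l u) / h - Real.sign u * Real.exp (-Real.sqrt (2 * l) * |u|)| ≤ 2 := by
  have h1 : |(Gl l (u - h) - Gl l u) / h| ≤ 1 := by
    rw [abs_div]
    rw [div_le_one (abs_pos.mpr hh)]
    calc |Gl l (u - h) - Gl l u| ≤ |u - h - u| := Gl_lip hl _ _
      _ = |h| := by rw [show u - h - u = -h by ring, abs_neg]
  have h2 : |Real.sign u * Real.exp (-Real.sqrt (2 * l) * |u|)| ≤ 1 := by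
    simpa [gl, neg_mul, abs_neg] using gl_abs_le (l := l) u
  calc |(Gl l (u - h) - Gl l u) / h - Real.sign u * Real.exp (-Real.sqrt (2 * l) * |u|)|
      ≤ |(Gl l (u - h) - Gl l u) / h| + |Real.sign u * Real.exp (-Real.sqrt (2 * l) * |u|)| :=
        abs_sub _ _
    _ ≤ 2 := by linarith

lemma gl_rewrite (l x y : ℝ) :
    gl l (x - y) = Real.sign (y - x) * Real.exp (-Real.sqrt (2 * l) * |y - x|) := by
  rw [gl, show (x - y : ℝ) = -(y - x) by ring, Real.sign_neg, abs_neg, neg_neg]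

lemma heat_eq {s : ℝ} (x : ℝ) :
    heatKernel s x = (2 * Real.pi * s) ^ (-(1/2 : ℝ)) * Real.exp (-((2 * s)⁻¹) * x ^ 2) := by
  rw [heatKernel]
  exact congrArg _ (congrArg Real.exp (by ring))

lemma heat_nonneg {s : ℝ} (hs : 0 < s) (x : ℝ) : 0 ≤ heatKernel s x :=
  mul_nonneg (Real.rpow_nonneg (by positivity) _) (Real.exp_pos _).le

lemma heat_le {s : ℝ} (hs : 0 < s) (x : ℝ) :
    heatKernel s x ≤ (2 * Real.pi * s) ^ (-(1/2 : ℝ)) := by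
  rw [heatKernel]
  have h1 : Real.exp (-x ^ 2 / (2 * s)) ≤ 1 :=
    Real.exp_le_one_iff.mpr (div_nonpos_of_nonpos_of_nonneg (neg_nonpos.mpr (sq_nonneg x)) (by linarith))
  calc (2 * Real.pi * s) ^ (-(1/2 : ℝ)) * Real.exp (-x ^ 2 / (2 * s))
      ≤ (2 * Real.pi * s) ^ (-(1/2 : ℝ)) * 1 :=
        mul_le_mul_of_nonneg_left h1 (Real.rpow_nonneg (by positivity) _)
    _ = _ := mul_one _

lemma heat_integrable {s : ℝ} (hs : 0 < s) (z : ℝ) :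
    Integrable (fun y => heatKernel s (y - z)) := by
  simp_rw [heat_eq]
  apply Integrable.const_mul
  exact (integrable_exp_neg_mul_sq (by positivity)).comp_sub_right z

lemma heat_integral {s : ℝ} (hs : 0 < s) (z : ℝ) :
    ∫ y, heatKernel s (y - z) = 1 := by
  rw [integral_sub_right_eq_self (fun y => heatKernel s y) z]
  simp_rw [heat_eq]
  rw [integral_const_mul, integral_gaussian]
  have h1 : Real.pi / (2 * s)⁻¹ = 2 * Real.pi * s := by field_simp
  rw [h1, rpow_neg_half_eq (by positivity)]
  exact inv_mul_cancel₀ (Real.sqrt_ne_zero'.mpr (by positivity))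

lemma heat_continuous {s : ℝ} : Continuous (fun q : ℝ × ℝ => heatKernel s (q.1 - q.2)) := by
  apply Continuous.mul continuous_const
  exact (Real.continuous_exp.comp (by fun_prop))

section Kfacts

variable {μ : Measure ℝ} [IsFiniteMeasure μ] {s : ℝ}

lemma heat_integrable_z (hs : 0 < s) (y : ℝ) :
    Integrable (fun z => heatKernel s (y - z)) μ := by
  apply Integrable.mono (integrable_const ((2 * Real.pi * s) ^ (-(1/2 : ℝ)) : ℝ))
  · exact (heat_continuous.comp (Continuous.prodMk continuous_const continuous_id)).aestronglyMeasurable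
  · apply ae_of_all
    intro z
    rw [Real.norm_eq_abs, Real.norm_eq_abs, abs_of_nonneg (heat_nonneg hs _),
      abs_of_nonneg (Real.rpow_nonneg (by positivity) _)]
    exact heat_le hs _

lemma K_nonneg (hs : 0 < s) (y : ℝ) : 0 ≤ ∫ z, heatKernel s (y - z) ∂μ :=
  integral_nonneg fun z => heat_nonneg hs _

lemma K_le (hs : 0 < s) (y : ℝ) :
    ∫ z, heatKernel s (y - z) ∂μ ≤ (2 * Real.pi * s) ^ (-(1/2 : ℝ)) * (μ Set.univ).toReal := by
  calc ∫ z, heatKernel s (y - z) ∂μ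
      ≤ ∫ _z, ((2 * Real.pi * s) ^ (-(1/2 : ℝ)) : ℝ) ∂μ :=
        integral_mono (heat_integrable_z hs y) (integrable_const _) (fun z => heat_le hs _)
    _ = (μ Set.univ).toReal • ((2 * Real.pi * s) ^ (-(1/2 : ℝ)) : ℝ) := integral_const _
    _ = _ := by rw [smul_eq_mul, mul_comm]

lemma K_prod_integrable (hs : 0 < s) :
    Integrable (fun q : ℝ × ℝ => heatKernel s (q.1 - q.2)) (volume.prod μ) := by
  rw [integrable_prod_iff' heat_continuous.aestronglyMeasurable]
  refine ⟨ae_of_all _ fun z => heat_integrable hs z, ?_⟩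
  have h1 : ∀ z, (∫ y, ‖heatKernel s (y - z)‖) = (1 : ℝ) := by
    intro z
    simp_rw [Real.norm_eq_abs, fun y => abs_of_nonneg (heat_nonneg hs (y - z))]
    exact heat_integral hs z
  exact (integrable_const (1 : ℝ)).congr (ae_of_all _ fun z => (h1 z).symm)

lemma K_integrable (hs : 0 < s) :
    Integrable (fun y => ∫ z, heatKernel s (y - z) ∂μ) := by
  exact (K_prod_integrable hs).integral_prod_left

lemma K_integral (hs : 0 < s) :
    ∫ y, ∫ z, heatKernel s (y - z) ∂μ = (μ Set.univ).toReal := by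
  rw [integral_integral_swap (K_prod_integrable hs)]
  simp_rw [heat_integral hs]
  rw [integral_const, smul_eq_mul, mul_one, measureReal_def]

end Kfacts


/-- Let `μ` be a finite Borel measure on `ℝ`, `λ > 0`, `T > 0`, `x ∈ ℝ` and
`p ≥ 1`. Then
`lim_{h→0} ∫_0^T ∫_ℝ |(G_λ(y−x−h) − G_λ(y−x))/h − g_λ(x−y)|^p · (∫_ℝ p_s(y−z) μ(dz)) dy ds = 0`,
the limit being over `h → 0`, `h ≠ 0`. -/
theorem martingale_increment_moment_tendsto_zero (μ : Measure ℝ) [IsFiniteMeasure μ]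
    (l : ℝ) (hl : 0 < l) (T : ℝ) (hT : 0 < T) (x : ℝ) (p : ℝ) (hp : 1 ≤ p) :
    Tendsto
      (fun h : ℝ => ∫ s in Set.Ioc (0 : ℝ) T,
        ∫ y, |(Gl l (y - x - h) - Gl l (y - x)) / h - gl l (x - y)| ^ p *
          ∫ z, heatKernel s (y - z) ∂μ)
      (nhdsWithin 0 {(0 : ℝ)}ᶜ) (nhds 0) := by
  have hcpos : 0 < Real.sqrt (2 * l) := sqrt2l_pos hl
  set m := (μ Set.univ).toReal with hm
  have hm0 : 0 ≤ m := ENNReal.toReal_nonneg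
  set C := ∫ s in Set.Ioc (0 : ℝ) T, ((2 * Real.pi * s) ^ (-(1/2 : ℝ)) : ℝ) with hCdef
  have hC0 : 0 ≤ C :=
    setIntegral_nonneg measurableSet_Ioc fun s hs =>
      Real.rpow_nonneg (by nlinarith [Real.pi_pos, hs.1]) _
  have hMint : IntegrableOn (fun s : ℝ => ((2 * Real.pi * s) ^ (-(1/2 : ℝ)) : ℝ))
      (Set.Ioc 0 T) := by
    have h1 : IntegrableOn (fun s : ℝ => s ^ (-(1/2 : ℝ))) (Set.Ioc 0 T) := by
      have := intervalIntegral.intervalIntegrable_rpow' (a := 0) (b := T)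
        (r := -(1/2 : ℝ)) (by norm_num)
      rwa [intervalIntegrable_iff_integrableOn_Ioc_of_le hT.le] at this
    have h2 : IntegrableOn (fun s : ℝ => (2 * Real.pi) ^ (-(1/2 : ℝ)) * s ^ (-(1/2 : ℝ)))
        (Set.Ioc 0 T) := h1.const_mul _
    apply h2.congr_fun _ measurableSet_Ioc
    intro s hs
    show (2 * Real.pi) ^ (-(1/2 : ℝ)) * s ^ (-(1/2 : ℝ)) = (2 * Real.pi * s) ^ (-(1/2 : ℝ))
    rw [← Real.mul_rpow (by positivity) hs.1.le]
  set Ctot := Real.sqrt (2 * l) * m * T + (2 : ℝ) ^ p * 2 * m * C with hCtot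
  apply squeeze_zero'
  · apply Eventually.of_forall
    intro h
    apply setIntegral_nonneg measurableSet_Ioc
    intro s hs
    apply integral_nonneg
    intro y
    exact mul_nonneg (Real.rpow_nonneg (abs_nonneg _) _) (K_nonneg hs.1 y)
  · have hδ : ∀ᶠ h in nhdsWithin (0 : ℝ) {(0 : ℝ)}ᶜ, |h| < (Real.sqrt (2 * l))⁻¹ := by
      apply eventually_nhdsWithin_of_eventually_nhds
      filter_upwards [Metric.ball_mem_nhds (0 : ℝ) (inv_pos.mpr hcpos)] with h hh
      simpa [Real.dist_eq] using hh
    filter_upwards [hδ, self_mem_nhdsWithin] with h hhδ hh0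
    have hh : h ≠ 0 := hh0
    have habs : 0 < |h| := abs_pos.mpr hh
    have hch : Real.sqrt (2 * l) * |h| ≤ 1 := by
      have := mul_le_mul_of_nonneg_left hhδ.le hcpos.le
      rwa [mul_inv_cancel₀ hcpos.ne'] at this
    -- inner estimate for each s in Ioc
    have inner : ∀ s ∈ Set.Ioc (0 : ℝ) T,
        (∫ y, |(Gl l (y - x - h) - Gl l (y - x)) / h - gl l (x - y)| ^ p *
          ∫ z, heatKernel s (y - z) ∂μ)
        ≤ (Real.sqrt (2 * l) * |h|) ^ p * m +
          ((2 : ℝ) ^ p * 2 * |h| * m) * ((2 * Real.pi * s) ^ (-(1/2 : ℝ)) : ℝ) := by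
      intro s hs
      have hs0 : (0 : ℝ) < s := hs.1
      have hKint : Integrable (fun y => ∫ z, heatKernel s (y - z) ∂μ) :=
        K_integrable hs0
      have hKind : Integrable
          ((Metric.closedBall x |h|).indicator (fun y => ∫ z, heatKernel s (y - z) ∂μ)) :=
        hKint.indicator measurableSet_closedBall
      have hpt : ∀ y, |(Gl l (y - x - h) - Gl l (y - x)) / h - gl l (x - y)| ^ p *
            (∫ z, heatKernel s (y - z) ∂μ)
          ≤ (Real.sqrt (2 * l) * |h|) ^ p * (∫ z, heatKernel s (y - z) ∂μ) +
            (2 : ℝ) ^ p * (Metric.closedBall x |h|).indicator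
              (fun y => ∫ z, heatKernel s (y - z) ∂μ) y := by
        intro y
        have hKy : 0 ≤ ∫ z, heatKernel s (y - z) ∂μ := K_nonneg hs0 y
        rw [gl_rewrite]
        by_cases hyB : y ∈ Metric.closedBall x |h|
        · have hD : |(Gl l (y - x - h) - Gl l (y - x)) / h -
              Real.sign (y - x) * Real.exp (-Real.sqrt (2 * l) * |y - x|)| ≤ 2 :=
            quot_bound hl hh (y - x)
          have hDp : |(Gl l (y - x - h) - Gl l (y - x)) / h -
              Real.sign (y - x) * Real.exp (-Real.sqrt (2 * l) * |y - x|)| ^ p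
              ≤ (2 : ℝ) ^ p :=
            Real.rpow_le_rpow (abs_nonneg _) hD (by linarith)
          rw [Set.indicator_of_mem hyB]
          have h1 := mul_le_mul_of_nonneg_right hDp hKy
          have h2 : 0 ≤ (Real.sqrt (2 * l) * |h|) ^ p * (∫ z, heatKernel s (y - z) ∂μ) :=
            mul_nonneg (Real.rpow_nonneg (by positivity) _) hKy
          linarith
        · have hyx : |h| < |y - x| := by
            rw [Metric.mem_closedBall, Real.dist_eq, not_le] at hyB
            exact hyB
          have hD := quot_est hl hh hyx hch
          have hDp : |(Gl l (y - x - h) - Gl l (y - x)) / h -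
              Real.sign (y - x) * Real.exp (-Real.sqrt (2 * l) * |y - x|)| ^ p
              ≤ (Real.sqrt (2 * l) * |h|) ^ p :=
            Real.rpow_le_rpow (abs_nonneg _) hD (by linarith)
          rw [Set.indicator_of_notMem hyB, mul_zero, add_zero]
          exact mul_le_mul_of_nonneg_right hDp hKy
      calc (∫ y, |(Gl l (y - x - h) - Gl l (y - x)) / h - gl l (x - y)| ^ p *
            ∫ z, heatKernel s (y - z) ∂μ)
          ≤ ∫ y, ((Real.sqrt (2 * l) * |h|) ^ p * (∫ z, heatKernel s (y - z) ∂μ) +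
              (2 : ℝ) ^ p * (Metric.closedBall x |h|).indicator
                (fun y => ∫ z, heatKernel s (y - z) ∂μ) y) := by
            apply integral_mono_of_nonneg
            · exact ae_of_all _ fun y =>
                mul_nonneg (Real.rpow_nonneg (abs_nonneg _) _) (K_nonneg hs0 y)
            · exact (hKint.const_mul _).add (hKind.const_mul _)
            · exact ae_of_all _ hpt
        _ = (Real.sqrt (2 * l) * |h|) ^ p * (∫ y, ∫ z, heatKernel s (y - z) ∂μ) +
            (2 : ℝ) ^ p * ∫ y, (Metric.closedBall x |h|).indicator
              (fun y => ∫ z, heatKernel s (y - z) ∂μ) y := by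
            rw [integral_add (hKint.const_mul _) (hKind.const_mul _),
              integral_const_mul, integral_const_mul]
        _ ≤ (Real.sqrt (2 * l) * |h|) ^ p * m +
            ((2 : ℝ) ^ p * 2 * |h| * m) * ((2 * Real.pi * s) ^ (-(1/2 : ℝ)) : ℝ) := by
            rw [K_integral hs0]
            have hset : ∫ y, (Metric.closedBall x |h|).indicator
                (fun y => ∫ z, heatKernel s (y - z) ∂μ) y
                ≤ 2 * |h| * (((2 * Real.pi * s) ^ (-(1/2 : ℝ)) : ℝ) * m) := by
              rw [integral_indicator measurableSet_closedBall]
              calc ∫ y in Metric.closedBall x |h|, ∫ z, heatKernel s (y - z) ∂μ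
                  ≤ ∫ _y in Metric.closedBall x |h|,
                      (((2 * Real.pi * s) ^ (-(1/2 : ℝ)) : ℝ) * m) := by
                    apply setIntegral_mono_on hKint.integrableOn
                      ((integrableOn_const_iff).mpr (Or.inr measure_closedBall_lt_top))
                      measurableSet_closedBall
                    exact fun y _ => K_le hs0 y
                _ = (volume (Metric.closedBall x |h|)).toReal *
                      (((2 * Real.pi * s) ^ (-(1/2 : ℝ)) : ℝ) * m) := by
                    rw [setIntegral_const, smul_eq_mul, measureReal_def]
                _ = 2 * |h| * (((2 * Real.pi * s) ^ (-(1/2 : ℝ)) : ℝ) * m) := by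
                    rw [Real.volume_closedBall, ENNReal.toReal_ofReal (by positivity)]
            have h2p : (0 : ℝ) ≤ (2 : ℝ) ^ p := Real.rpow_nonneg (by norm_num) _
            nlinarith [mul_le_mul_of_nonneg_left hset h2p]
    -- outer estimate
    have houter : (∫ s in Set.Ioc (0 : ℝ) T,
        ∫ y, |(Gl l (y - x - h) - Gl l (y - x)) / h - gl l (x - y)| ^ p *
          ∫ z, heatKernel s (y - z) ∂μ)
        ≤ (Real.sqrt (2 * l) * |h|) ^ p * m * T + ((2 : ℝ) ^ p * 2 * |h| * m) * C := by
      calc (∫ s in Set.Ioc (0 : ℝ) T,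
            ∫ y, |(Gl l (y - x - h) - Gl l (y - x)) / h - gl l (x - y)| ^ p *
              ∫ z, heatKernel s (y - z) ∂μ)
          ≤ ∫ s in Set.Ioc (0 : ℝ) T,
              ((Real.sqrt (2 * l) * |h|) ^ p * m +
               ((2 : ℝ) ^ p * 2 * |h| * m) * ((2 * Real.pi * s) ^ (-(1/2 : ℝ)) : ℝ)) := by
            apply integral_mono_of_nonneg
            · filter_upwards [ae_restrict_mem measurableSet_Ioc] with s hs
              exact integral_nonneg fun y =>
                mul_nonneg (Real.rpow_nonneg (abs_nonneg _) _) (K_nonneg hs.1 y)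
            · exact ((integrableOn_const_iff).mpr (Or.inr (by
                rw [Real.volume_Ioc]; exact ENNReal.ofReal_lt_top))).add (hMint.const_mul _)
            · filter_upwards [ae_restrict_mem measurableSet_Ioc] with s hs
              exact inner s hs
        _ = (Real.sqrt (2 * l) * |h|) ^ p * m * T + ((2 : ℝ) ^ p * 2 * |h| * m) * C := by
            rw [integral_add ((integrableOn_const_iff).mpr (Or.inr (by
                rw [Real.volume_Ioc]; exact ENNReal.ofReal_lt_top))).integrable (hMint.const_mul _),
              integral_const_mul, setIntegral_const, smul_eq_mul, measureReal_def,
              Real.volume_Ioc, sub_zero, ENNReal.toReal_ofReal hT.le]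
            rw [integral_const_mul, ← hCdef]
            ring
    -- conclude
    have hpow : (Real.sqrt (2 * l) * |h|) ^ p ≤ Real.sqrt (2 * l) * |h| := by
      calc (Real.sqrt (2 * l) * |h|) ^ p ≤ (Real.sqrt (2 * l) * |h|) ^ (1 : ℝ) :=
            Real.rpow_le_rpow_of_exponent_ge (mul_pos hcpos habs) hch hp
        _ = Real.sqrt (2 * l) * |h| := Real.rpow_one _
    calc (∫ s in Set.Ioc (0 : ℝ) T,
          ∫ y, |(Gl l (y - x - h) - Gl l (y - x)) / h - gl l (x - y)| ^ p *
            ∫ z, heatKernel s (y - z) ∂μ)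
        ≤ (Real.sqrt (2 * l) * |h|) ^ p * m * T + ((2 : ℝ) ^ p * 2 * |h| * m) * C := houter
      _ ≤ Ctot * |h| := by
          rw [hCtot]
          have h1 : (Real.sqrt (2 * l) * |h|) ^ p * m * T
              ≤ Real.sqrt (2 * l) * |h| * m * T := by
            have := mul_le_mul_of_nonneg_right
              (mul_le_mul_of_nonneg_right hpow hm0) hT.le
            linarith
          nlinarith [Real.rpow_nonneg (show (0:ℝ) ≤ 2 by norm_num) p]
  · have h1 : Tendsto (fun h : ℝ => Ctot * |h|) (nhds (0 : ℝ)) (nhds 0) := by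
      have := (continuous_abs.tendsto (0 : ℝ)).const_mul Ctot
      simpa using this
    exact h1.mono_left nhdsWithin_le_nhds
end
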